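/- arXiv:1811.10976 — 2 statements merged into one kernel-verified Lean document; each statement's English description precedes it below -/
import Mathlib

section
/- With the same setup, G(φ̄)·G(φ) = φ(-1)·N(c). -/
open NumberField
set_option synthInstance.maxHeartbeats 1000000
set_option maxHeartbeats 1000000

-- auxiliary: sum over ring = sum over units, when f vanishes on nonunits
lemma sum_units_aux {R : Type*} [CommRing R] [Fintype R] [Fintype Rˣ] (f : R → ℂ)
    (hf : ∀ x : R, ¬IsUnit x → f x = 0) : ∑ x : R, f x = ∑ u : Rˣ, f u := by
  classical
  rw [show (∑ u : Rˣ, f u) = ∑ x ∈ Finset.univ.image (Units.val : Rˣ → R), f x from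
    (Finset.sum_image (fun a _ b _ h => Units.ext h)).symm]
  refine (Finset.sum_subset (Finset.subset_univ _) fun x _ hx => hf x ?_).symm
  intro hu
  exact hx (Finset.mem_image.2 ⟨hu.unit, Finset.mem_univ _, rfl⟩)

-- nonunit in finite comm ring is a zero divisor
lemma exists_ne_zero_mul_eq_zero {R : Type*} [CommRing R] [Fintype R] {a : R}
    (ha : ¬IsUnit a) : ∃ y : R, y ≠ 0 ∧ y * a = 0 := by
  classical
  by_contra h
  push_neg at h
  have hinj : Function.Injective (fun y : R => y * a) := by
    intro y z hyz
    have : (y - z) * a = 0 := by simpa [sub_mul] using sub_eq_zero.2 hyz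
    by_contra hne
    exact (h _ (sub_ne_zero.2 hne) this)
  obtain ⟨b, hb⟩ := Finite.surjective_of_injective hinj 1
  exact ha (IsUnit.of_mul_eq_one (a := a) b (by rw [mul_comm]; exact hb))

-- key lemma: twisted sum vanishes for nonunit a, using primitivity of φ
lemma twisted_sum_eq_zero
    (F : Type) [Field F] [NumberField F]
    (c : Ideal (𝓞 F)) [Fintype (𝓞 F ⧸ c)]
    (φ : MulChar (𝓞 F ⧸ c) ℂ)
    (hφ : ∀ d : Ideal (𝓞 F), c < d →
      ∃ x : 𝓞 F, IsUnit (Ideal.Quotient.mk c x) ∧ x - 1 ∈ d ∧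
        φ (Ideal.Quotient.mk c x) ≠ 1)
    (ψ : AddChar (𝓞 F ⧸ c) ℂ) {a : 𝓞 F ⧸ c} (ha : ¬IsUnit a) :
    ∑ x : 𝓞 F ⧸ c, φ x * ψ (a * x) = 0 := by
  classical
  obtain ⟨y, hy0, hya⟩ := exists_ne_zero_mul_eq_zero ha
  -- the ideal d = preimage of annihilator of a
  set d : Ideal (𝓞 F) :=
    { carrier := {r : 𝓞 F | Ideal.Quotient.mk c r * a = 0}
      add_mem' := fun {p q} hp hq => by
        simp only [Set.mem_setOf_eq, map_add, add_mul] at *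
        rw [hp, hq, add_zero]
      zero_mem' := by simp
      smul_mem' := fun r x hx => by
        simp only [Set.mem_setOf_eq, smul_eq_mul, map_mul, mul_assoc] at *
        rw [hx, mul_zero] } with hd
  have hcd : c < d := by
    constructor
    · intro r hr
      have : Ideal.Quotient.mk c r = 0 := Ideal.Quotient.eq_zero_iff_mem.2 hr
      simp [hd, this]
    · intro hsub
      obtain ⟨y', rfl⟩ := Ideal.Quotient.mk_surjective y
      have : y' ∈ d := by simpa [hd] using hya
      exact hy0 (Ideal.Quotient.eq_zero_iff_mem.2 (hsub this))
  obtain ⟨x0, hx0u, hx0d, hx0ne⟩ := hφ d hcd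
  have hax0 : a * Ideal.Quotient.mk c x0 = a := by
    have : Ideal.Quotient.mk c (x0 - 1) * a = 0 := hx0d
    rw [map_sub, map_one, sub_mul, one_mul, sub_eq_zero] at this
    rw [mul_comm, this]
  set u : (𝓞 F ⧸ c)ˣ := hx0u.unit with hu
  have hS : φ (Ideal.Quotient.mk c x0) * (∑ x : 𝓞 F ⧸ c, φ x * ψ (a * x)) =
      ∑ x : 𝓞 F ⧸ c, φ x * ψ (a * x) := by
    rw [Finset.mul_sum]
    refine Fintype.sum_bijective (fun x => (u : 𝓞 F ⧸ c) * x) (Units.mulLeft_bijective u) _ _ fun x => ?_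
    have huv : (u : 𝓞 F ⧸ c) = Ideal.Quotient.mk c x0 := hx0u.unit_spec
    rw [huv, map_mul φ, ← mul_assoc a, hax0, mul_assoc]
  by_contra hS0
  exact hx0ne (mul_right_cancel₀ hS0 (by rw [hS, one_mul]))

set_option synthInstance.maxHeartbeats 1000000 in
/-- With the same setup (primitive character `φ` of `(O_F/c)ˣ`, primitive additive character
`ψ` of `O_F/c` induced by `e_F(·/c)` with `c` coprime to the different), one has
`G(φ̄) · G(φ) = φ(-1) · N(c)`. -/
theorem gaussSum_conj_mul_gaussSum
    (F : Type) [Field F] [NumberField F]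
    (c : Ideal (𝓞 F)) (hc : c ≠ ⊥)
    [Fintype (𝓞 F ⧸ c)] [Fintype (𝓞 F ⧸ c)ˣ]
    (φ : MulChar (𝓞 F ⧸ c) ℂ)
    (hφ : ∀ d : Ideal (𝓞 F), c < d →
      ∃ x : 𝓞 F, IsUnit (Ideal.Quotient.mk c x) ∧ x - 1 ∈ d ∧
        φ (Ideal.Quotient.mk c x) ≠ 1)
    (ψ : AddChar (𝓞 F ⧸ c) ℂ) (hψ : ψ.IsPrimitive) :
    (∑ u : (𝓞 F ⧸ c)ˣ, starRingEnd ℂ (φ u) * ψ u) * (∑ u : (𝓞 F ⧸ c)ˣ, φ u * ψ u) =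
      φ (-1) * (Ideal.absNorm c : ℂ) := by
  classical
  set R := 𝓞 F ⧸ c with hR
  set G : ℂ := ∑ x : R, φ x * ψ x with hG
  -- convert sums over units to sums over the ring
  have h1 : (∑ u : Rˣ, starRingEnd ℂ (φ u) * ψ u) =
      ∑ x : R, starRingEnd ℂ (φ x) * ψ x :=
    (sum_units_aux (fun x => starRingEnd ℂ (φ x) * ψ x)
      fun x hx => by show starRingEnd ℂ (φ x) * ψ x = 0; rw [φ.map_nonunit hx, map_zero, zero_mul]).symm
  have h2 : (∑ u : Rˣ, φ u * ψ u) = G :=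
    (sum_units_aux (fun x => φ x * ψ x)
      fun x hx => by show φ x * ψ x = 0; rw [φ.map_nonunit hx, zero_mul]).symm
  rw [h1, h2]
  -- key identity: for all a, conj (φ a) * G = ∑ x, φ x * ψ (a * x)
  have key : ∀ a : R, starRingEnd ℂ (φ a) * G = ∑ x : R, φ x * ψ (a * x) := by
    intro a
    by_cases ha : IsUnit a
    · obtain ⟨v, rfl⟩ := ha
      have hnorm : ‖φ (v : R)‖ = 1 := by
        refine Complex.norm_eq_one_of_pow_eq_one (n := Fintype.card Rˣ) ?_ Fintype.card_ne_zero
        rw [← map_pow, ← Units.val_pow_eq_pow_val, pow_card_eq_one, Units.val_one, map_one]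
      have hconj : starRingEnd ℂ (φ (v : R)) = φ ((v⁻¹ : Rˣ) : R) := by
        rw [← Complex.inv_eq_conj hnorm]
        refine (eq_inv_of_mul_eq_one_left ?_).symm
        rw [← map_mul, ← Units.val_mul, inv_mul_cancel, Units.val_one, map_one]
      rw [hconj, hG, Finset.mul_sum]
      refine Fintype.sum_bijective (fun x => ((v⁻¹ : Rˣ) : R) * x)
        (Units.mulLeft_bijective _) _ _ fun x => ?_
      rw [map_mul φ, ← mul_assoc (v : R), ← Units.val_mul, mul_inv_cancel, Units.val_one,
        one_mul, mul_assoc]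
    · rw [φ.map_nonunit ha, map_zero, zero_mul,
        (twisted_sum_eq_zero F c φ hφ ψ ha).symm]
  calc (∑ x : R, starRingEnd ℂ (φ x) * ψ x) * G
      = ∑ a : R, ψ a * (starRingEnd ℂ (φ a) * G) := by
        rw [Finset.sum_mul]; exact Finset.sum_congr rfl fun a _ => by ring
    _ = ∑ a : R, ∑ x : R, φ x * (ψ a * ψ (a * x)) := by
        refine Finset.sum_congr rfl fun a _ => ?_
        rw [key a, Finset.mul_sum]
        exact Finset.sum_congr rfl fun x _ => by ring
    _ = ∑ x : R, φ x * ∑ a : R, ψ (a * (1 + x)) := by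
        rw [Finset.sum_comm]
        refine Finset.sum_congr rfl fun x _ => ?_
        rw [Finset.mul_sum]
        refine Finset.sum_congr rfl fun a _ => ?_
        rw [← AddChar.map_add_eq_mul, mul_one_add]
    _ = ∑ x : R, φ x * (if 1 + x = 0 then (Fintype.card R : ℂ) else 0) := by
        refine Finset.sum_congr rfl fun x _ => ?_
        rw [AddChar.sum_mulShift _ hψ]
        split_ifs <;> simp <;> exact Or.inl (Fintype.card_congr' rfl)
    _ = φ (-1) * (Fintype.card R : ℂ) := by
        rw [Finset.sum_eq_single (-1 : R)]
        · simp
        · intro b _ hb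
          rw [if_neg, mul_zero]
          intro h
          exact hb (by linear_combination h - (1 : R))
        · simp
    _ = φ (-1) * (Ideal.absNorm c : ℂ) := by
        rw [Ideal.absNorm_apply, Submodule.cardQuot_apply, Nat.card_eq_fintype_card]
end

section
/- For real s and integer j with Re(s ± j) > 0, the Mellin transform of the modified Bessel function of the second kind satisfies ∫₀^∞ y^s K_j(a y) dy/y = 2^{s-2} a^{-s} Γ((s+j)/2) Γ((s-j)/2) for any a > 0. -/
open MeasureTheory Real Set intervalIntegral

/-- The modified Bessel function of the second kind `K_j`, defined for positive real
argument `x` by the standard integral representation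
`K_j(x) = ∫₀^∞ exp(-x cosh t) cosh(j t) dt`. -/
noncomputable def besselK (j : ℤ) (x : ℝ) : ℝ :=
  ∫ t in Ioi (0 : ℝ), Real.exp (-x * Real.cosh t) * Real.cosh (j * t)


lemma real_beta_aux {p q : ℝ} (hp : 0 < p) (hq : 0 < q) :
    Gamma p * Gamma q = Gamma (p + q) * ∫ u in (0:ℝ)..1, u ^ (p-1) * (1-u) ^ (q-1) := by
  have h := Complex.Gamma_mul_Gamma_eq_betaIntegral (s := (p:ℂ)) (t := (q:ℂ))
    (by simpa using hp) (by simpa using hq)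
  have hb : Complex.betaIntegral (p:ℂ) (q:ℂ)
      = ((∫ u in (0:ℝ)..1, u ^ (p-1) * (1-u) ^ (q-1) : ℝ) : ℂ) := by
    rw [Complex.betaIntegral, ← intervalIntegral.integral_ofReal]
    refine intervalIntegral.integral_congr fun x hx => ?_
    rw [uIcc_of_le zero_le_one] at hx
    rw [Complex.ofReal_mul, Complex.ofReal_cpow hx.1, Complex.ofReal_cpow (by linarith [hx.2])]
    push_cast
    ring
  rw [hb, Complex.Gamma_ofReal, Complex.Gamma_ofReal, ← Complex.ofReal_add,
    Complex.Gamma_ofReal, ← Complex.ofReal_mul, ← Complex.ofReal_mul] at h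
  exact_mod_cast h


lemma pointwise_id (p q t : ℝ) :
    Real.cosh ((p - q) * t) * Real.cosh t ^ (-(p + q)) =
      2 ^ (p + q - 2) *
        (2 * Real.exp (2 * t) / (1 + Real.exp (2 * t)) ^ 2 *
          ((1 / (1 + Real.exp (2 * t))) ^ (q - 1) * (1 - 1 / (1 + Real.exp (2 * t))) ^ (p - 1) +
           (1 / (1 + Real.exp (2 * t))) ^ (p - 1) * (1 - 1 / (1 + Real.exp (2 * t))) ^ (q - 1))) := by
  have hE0 : 0 < Real.exp (2 * t) := Real.exp_pos _
  have hE1 : 0 < 1 + Real.exp (2 * t) := by positivity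
  set E := Real.exp (2 * t) with hE
  set X := (1 + E) ^ (-(p + q)) with hX
  have hg : 1 - 1 / (1 + E) = E / (1 + E) := by field_simp; ring
  have L1 : Real.cosh ((p - q) * t) * (Real.exp t + Real.exp (-t)) ^ (-(p + q)) =
      (1 / 2) * (E ^ p + E ^ q) * X := by
    have h1 : Real.exp t + Real.exp (-t) = Real.exp (-t) * (1 + E) := by
      rw [mul_add, mul_one, hE, ← Real.exp_add]; ring_nf
    rw [h1, mul_rpow (Real.exp_pos _).le hE1.le, ← Real.exp_mul, Real.cosh_eq, hX, hE,
      ← Real.exp_mul, ← Real.exp_mul]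
    ring_nf
    rw [← Real.exp_add, ← Real.exp_add]
    ring_nf
  have L2 : 2 * E / (1 + E) ^ 2 *
        ((1 / (1 + E)) ^ (q - 1) * (1 - 1 / (1 + E)) ^ (p - 1) +
         (1 / (1 + E)) ^ (p - 1) * (1 - 1 / (1 + E)) ^ (q - 1)) =
      2 * (E ^ p + E ^ q) * X := by
    rw [hg, div_rpow hE0.le hE1.le, div_rpow hE0.le hE1.le, one_div,
      Real.inv_rpow hE1.le, Real.inv_rpow hE1.le, ← Real.rpow_neg hE1.le, ← Real.rpow_neg hE1.le,
      ← Real.rpow_natCast (1 + E) 2, hX]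
    rw [show ((2:ℕ):ℝ) = (2:ℝ) by norm_num]
    simp only [Real.rpow_def_of_pos hE0, Real.rpow_def_of_pos hE1, div_eq_mul_inv, ← Real.exp_neg,
      ← Real.exp_add]
    ring_nf
    simp only [hE, Real.log_exp, ← Real.exp_add]
    ring_nf
  have h2 : Real.cosh t ^ (-(p + q)) = 2 ^ (p + q) * (Real.exp t + Real.exp (-t)) ^ (-(p + q)) := by
    rw [Real.cosh_eq, div_rpow (by positivity) (by norm_num),
      Real.rpow_neg (by norm_num : (0:ℝ) ≤ 2) (p + q), div_inv_eq_mul]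
    ring
  calc Real.cosh ((p - q) * t) * Real.cosh t ^ (-(p + q))
      = 2 ^ (p + q) * (Real.cosh ((p - q) * t) * (Real.exp t + Real.exp (-t)) ^ (-(p + q))) := by
        rw [h2]; ring
    _ = 2 ^ (p + q) * ((1 / 2) * (E ^ p + E ^ q) * X) := by rw [L1]
    _ = 2 ^ (p + q - 2) * (2 * (E ^ p + E ^ q) * X) := by
        rw [Real.rpow_sub (by norm_num : (0:ℝ) < 2)]
        norm_num
        ring
    _ = _ := by rw [L2]


section subst
variable {p q : ℝ}

lemma gDeriv (t : ℝ) :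
    HasDerivAt (fun t : ℝ => (1 + Real.exp (2*t))⁻¹)
      (-(Real.exp (2*t) * 2) / (1 + Real.exp (2*t)) ^ 2) t := by
  have h1 : HasDerivAt (fun t : ℝ => 1 + Real.exp (2*t)) (Real.exp (2*t) * 2) t := by
    simpa using (((hasDerivAt_id t).const_mul (2:ℝ)).exp.const_add 1)
  exact h1.inv (by positivity)

lemma gInj : InjOn (fun t : ℝ => (1 + Real.exp (2*t))⁻¹) (Ioi 0) := by
  intro x _ y _ hxy
  have h := inv_injective hxy
  have h2 := add_left_cancel h
  have := Real.exp_injective h2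
  linarith [mul_left_cancel₀ (two_ne_zero (α := ℝ)) this]

lemma gImg : (fun t : ℝ => (1 + Real.exp (2*t))⁻¹) '' Ioi 0 = Ioo 0 (1/2) := by
  ext u
  constructor
  · rintro ⟨t, ht, rfl⟩
    have h1 : 1 < Real.exp (2*t) := by
      rw [Real.one_lt_exp_iff]; exact mul_pos two_pos ht
    constructor
    · positivity
    · rw [show (1/2 : ℝ) = ((2:ℝ))⁻¹ by norm_num]
      exact inv_strictAnti₀ two_pos (by linarith)
  · rintro ⟨hu0, hu2⟩
    have h2 : 2 < 1/u := by rw [lt_div_iff₀ hu0]; linarith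
    refine ⟨Real.log (1/u - 1)/2, ?_, ?_⟩
    · have h3 := Real.log_pos (by linarith : (1:ℝ) < 1/u - 1)
      exact div_pos h3 two_pos
    · show (1 + Real.exp (2 * (Real.log (1/u - 1)/2)))⁻¹ = u
      rw [show 2 * (Real.log (1/u - 1)/2) = Real.log (1/u - 1) by ring,
        Real.exp_log (by linarith)]
      rw [show 1 + (1/u - 1) = u⁻¹ by rw [one_div]; ring, inv_inv]

end subst

section main
variable {p q : ℝ}

lemma intInt1 (hp : 0 < p) (hq : 0 < q) :
    IntervalIntegrable (fun u : ℝ => u ^ (q-1) * (1-u) ^ (p-1)) volume 0 (1/2) := by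
  refine (intervalIntegral.intervalIntegrable_rpow' (by linarith)).mul_continuousOn ?_
  refine ContinuousOn.rpow_const (continuousOn_const.sub continuousOn_id) fun x hx => ?_
  rw [uIcc_of_le (by norm_num)] at hx
  exact Or.inl (by norm_num; linarith [hx.2])

lemma intInt2 (hp : 0 < p) (hq : 0 < q) :
    IntervalIntegrable (fun u : ℝ => u ^ (q-1) * (1-u) ^ (p-1)) volume (1/2) 1 := by
  have h := (intInt1 hq hp).comp_sub_left 1
  have he : (fun x : ℝ => (1-x) ^ (p-1) * (1-(1-x)) ^ (q-1))
      = fun u : ℝ => u ^ (q-1) * (1-u) ^ (p-1) := by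
    funext x; rw [sub_sub_cancel]; ring
  rw [he] at h
  norm_num at h
  exact h.symm

lemma comp_half :
    (∫ u in (0:ℝ)..(1/2), u ^ (p-1) * (1-u) ^ (q-1))
      = ∫ u in (1/2:ℝ)..1, u ^ (q-1) * (1-u) ^ (p-1) := by
  have h := intervalIntegral.integral_comp_sub_left
    (a := (0:ℝ)) (b := 1/2) (fun u : ℝ => u ^ (q-1) * (1-u) ^ (p-1)) 1
  norm_num at h
  rw [← h]
  refine intervalIntegral.integral_congr fun x hx => ?_
  ring

lemma real_beta' {p q : ℝ} (hp : 0 < p) (hq : 0 < q) :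
    Gamma p * Gamma q = Gamma (p + q) * ∫ u in (0:ℝ)..1, u ^ (p-1) * (1-u) ^ (q-1) :=
  real_beta_aux hp hq

lemma cosh_subst (hp : 0 < p) (hq : 0 < q) :
    IntegrableOn (fun t => Real.cosh ((p-q)*t) * Real.cosh t ^ (-(p+q))) (Ioi (0:ℝ)) ∧
    ∫ t in Ioi (0:ℝ), Real.cosh ((p-q)*t) * Real.cosh t ^ (-(p+q))
      = 2 ^ (p+q-2) * (Gamma p * Gamma q / Gamma (p+q)) := by
  set F : ℝ → ℝ := fun u => u ^ (q-1) * (1-u) ^ (p-1) + u ^ (p-1) * (1-u) ^ (q-1) with hF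
  set g : ℝ → ℝ := fun t => (1 + Real.exp (2*t))⁻¹ with hg
  set g' : ℝ → ℝ := fun t => -(Real.exp (2*t) * 2) / (1 + Real.exp (2*t)) ^ 2 with hg'
  have hd : ∀ t ∈ Ioi (0:ℝ), HasDerivWithinAt g (g' t) (Ioi 0) t :=
    fun t _ => (gDeriv t).hasDerivWithinAt
  have key : ∀ t : ℝ, Real.cosh ((p-q)*t) * Real.cosh t ^ (-(p+q))
      = 2 ^ (p+q-2) * (|g' t| • F (g t)) := by
    intro t
    have habs : |g' t| = 2 * Real.exp (2*t) / (1 + Real.exp (2*t)) ^ 2 := by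
      rw [hg', abs_div, abs_neg, abs_of_pos (by positivity), abs_of_pos (by positivity)]
      ring
    rw [smul_eq_mul, habs, hg, hF, pointwise_id p q t, one_div]
  have hFIoo : IntegrableOn F (Ioo (0:ℝ) (1/2)) := by
    have h1 := (intervalIntegrable_iff_integrableOn_Ioo_of_le (by norm_num)).mp (intInt1 hp hq)
    have h2 := (intervalIntegrable_iff_integrableOn_Ioo_of_le (by norm_num)).mp (intInt1 hq hp)
    exact h1.add h2
  have hInt0 : IntegrableOn (fun t => |g' t| • F (g t)) (Ioi (0:ℝ)) := by
    refine (integrableOn_image_iff_integrableOn_abs_deriv_smul measurableSet_Ioi hd gInj F).mp ?_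
    rw [show g '' Ioi 0 = Ioo (0:ℝ) (1/2) from gImg]
    exact hFIoo
  constructor
  · refine IntegrableOn.congr_fun (hInt0.const_mul ((2:ℝ) ^ (p+q-2))) ?_ measurableSet_Ioi
    exact fun t _ => (key t).symm
  · have step1 : ∫ t in Ioi (0:ℝ), Real.cosh ((p-q)*t) * Real.cosh t ^ (-(p+q))
        = 2 ^ (p+q-2) * ∫ t in Ioi (0:ℝ), |g' t| • F (g t) := by
      rw [← MeasureTheory.integral_const_mul]
      exact setIntegral_congr_fun measurableSet_Ioi fun t _ => key t
    have step2 : ∫ t in Ioi (0:ℝ), |g' t| • F (g t) = ∫ u in Ioo (0:ℝ) (1/2), F u := by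
      rw [← integral_image_eq_integral_abs_deriv_smul measurableSet_Ioi hd gInj F,
        show g '' Ioi 0 = Ioo (0:ℝ) (1/2) from gImg]
    have step3 : ∫ u in Ioo (0:ℝ) (1/2), F u = ∫ u in (0:ℝ)..(1/2), F u := by
      rw [intervalIntegral.integral_of_le (by norm_num), integral_Ioc_eq_integral_Ioo]
    have step4 : ∫ u in (0:ℝ)..(1/2), F u = ∫ u in (0:ℝ)..1, u ^ (q-1) * (1-u) ^ (p-1) := by
      rw [hF]
      rw [intervalIntegral.integral_add (intInt1 hp hq) (intInt1 hq hp),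
        comp_half (p := p) (q := q)]
      exact intervalIntegral.integral_add_adjacent_intervals (intInt1 hp hq) (intInt2 hp hq)
    have hGpos : 0 < Gamma (q + p) := Real.Gamma_pos_of_pos (by linarith)
    have hbeta := real_beta' hq hp
    rw [step1, step2, step3, step4]
    rw [show (∫ u in (0:ℝ)..1, u ^ (q-1) * (1-u) ^ (p-1)) = Gamma q * Gamma p / Gamma (q+p) by
      field_simp at hbeta ⊢; linarith [hbeta]]
    rw [show q + p = p + q by ring]
    ring

end main

/-- For real `s` and integer `j` with `s + j > 0` and `s - j > 0`, and any `a > 0`, the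
Mellin transform of the modified Bessel function of the second kind satisfies
`∫₀^∞ y^s K_j(a y) dy/y = 2^(s-2) a^(-s) Γ((s+j)/2) Γ((s-j)/2)`. -/
theorem mellin_besselK (s : ℝ) (j : ℤ) (a : ℝ) (ha : 0 < a)
    (hsj : 0 < s + j) (hsj' : 0 < s - j) :
    ∫ y in Ioi (0 : ℝ), y ^ s * besselK j (a * y) / y =
      (2 : ℝ) ^ (s - 2) * a ^ (-s) * Real.Gamma ((s + j) / 2) * Real.Gamma ((s - j) / 2) := by
  set p : ℝ := (s + j) / 2 with hpdef
  set q : ℝ := (s - j) / 2 with hqdef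
  have hp : 0 < p := by positivity
  have hq : 0 < q := by positivity
  have hpq : p + q = s := by rw [hpdef, hqdef]; ring
  have hpq' : p - q = (j : ℝ) := by rw [hpdef, hqdef]; ring
  have hs : 0 < s := by rw [← hpq]; positivity
  have hcs := cosh_subst hp hq
  rw [hpq, hpq'] at hcs
  -- inner integral formula
  have hb : ∀ t : ℝ, 0 < a * Real.cosh t := fun t => mul_pos ha (Real.cosh_pos t)
  have hinner : ∀ t : ℝ, (∫ y in Ioi (0:ℝ), y ^ (s-1) * Real.exp (-(a * Real.cosh t) * y))
      = a ^ (-s) * Real.cosh t ^ (-s) * Gamma s := by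
    intro t
    have h := Real.integral_rpow_mul_exp_neg_mul_Ioi hs (hb t)
    have he : (fun y : ℝ => y ^ (s-1) * Real.exp (-(a * Real.cosh t) * y))
        = fun y : ℝ => y ^ (s-1) * Real.exp (-(a * Real.cosh t * y)) := by
      funext y; rw [neg_mul]
    rw [he, h, one_div, Real.inv_rpow (hb t).le, mul_rpow ha.le (Real.cosh_pos t).le,
      mul_inv, ← Real.rpow_neg ha.le, ← Real.rpow_neg (Real.cosh_pos t).le]
  -- integrability for each t
  have hyint : ∀ t : ℝ, Integrable
      (fun y => Real.cosh (j*t) * (y ^ (s-1) * Real.exp (-(a * Real.cosh t) * y)))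
      (volume.restrict (Ioi 0)) := by
    intro t
    refine Integrable.const_mul ?_ _
    have h := integrableOn_rpow_mul_exp_neg_mul_rpow (by linarith : (-1:ℝ) < s - 1)
      zero_lt_one (hb t)
    simp only [Real.rpow_one] at h
    exact h.congr_fun (fun y _ => by simp only [neg_mul]) measurableSet_Ioi
  -- measurability
  have hmeas : AEStronglyMeasurable
      (fun z : ℝ × ℝ => Real.cosh (j*z.1) * (z.2 ^ (s-1) * Real.exp (-(a * Real.cosh z.1) * z.2)))
      ((volume.restrict (Ioi 0)).prod (volume.restrict (Ioi 0))) := by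
    apply Measurable.aestronglyMeasurable
    fun_prop
  -- product integrability
  have hprod : Integrable
      (fun z : ℝ × ℝ => Real.cosh (j*z.1) * (z.2 ^ (s-1) * Real.exp (-(a * Real.cosh z.1) * z.2)))
      ((volume.restrict (Ioi 0)).prod (volume.restrict (Ioi 0))) := by
    refine (integrable_prod_iff hmeas).mpr ⟨ae_of_all _ fun t => hyint t, ?_⟩
    have hval : ∀ t : ℝ, (∫ y in Ioi (0:ℝ),
        ‖Real.cosh (j*t) * (y ^ (s-1) * Real.exp (-(a * Real.cosh t) * y))‖)
        = (a ^ (-s) * Gamma s) * (Real.cosh (j*t) * Real.cosh t ^ (-s)) := by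
      intro t
      have hnn : ∀ y ∈ Ioi (0:ℝ),
          ‖Real.cosh (j*t) * (y ^ (s-1) * Real.exp (-(a * Real.cosh t) * y))‖
          = Real.cosh (j*t) * (y ^ (s-1) * Real.exp (-(a * Real.cosh t) * y)) := by
        intro y hy
        rw [Real.norm_eq_abs, abs_of_nonneg]
        have := Real.cosh_pos (x := (j:ℝ)*t)
        have h2 : (0:ℝ) < y := hy
        positivity
      rw [setIntegral_congr_fun measurableSet_Ioi hnn, MeasureTheory.integral_const_mul,
        hinner t]
      ring
    have hI : Integrable (fun t : ℝ => (a ^ (-s) * Gamma s) * (Real.cosh (j*t) * Real.cosh t ^ (-s)))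
        (volume.restrict (Ioi 0)) := hcs.1.const_mul _
    exact hI.congr (ae_of_all _ fun t => (hval t).symm)
  -- rewrite LHS as double integral
  have hLHS : ∫ y in Ioi (0 : ℝ), y ^ s * besselK j (a * y) / y
      = ∫ y in Ioi (0:ℝ), ∫ t in Ioi (0:ℝ),
          Real.cosh (j*t) * (y ^ (s-1) * Real.exp (-(a * Real.cosh t) * y)) := by
    refine setIntegral_congr_fun measurableSet_Ioi fun y hy => ?_
    have hy0 : (0:ℝ) < y := hy
    rw [besselK]
    rw [show y ^ s * (∫ t in Ioi (0:ℝ), Real.exp (-(a*y) * Real.cosh t) * Real.cosh (j * t)) / y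
        = y ^ (s-1) * ∫ t in Ioi (0:ℝ), Real.exp (-(a*y) * Real.cosh t) * Real.cosh (j * t) by
      rw [Real.rpow_sub hy0, Real.rpow_one]; ring]
    rw [← MeasureTheory.integral_const_mul]
    refine setIntegral_congr_fun measurableSet_Ioi fun t _ => ?_
    rw [show -(a*y) * Real.cosh t = -(a * Real.cosh t) * y by ring]
    ring
  -- swap
  have hswap := MeasureTheory.integral_integral_swap
    (f := fun t y => Real.cosh (j*t) * (y ^ (s-1) * Real.exp (-(a * Real.cosh t) * y)))
    (μ := volume.restrict (Ioi 0)) (ν := volume.restrict (Ioi 0)) hprod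
  rw [hLHS, ← hswap]
  have hev : ∫ t in Ioi (0:ℝ), ∫ y in Ioi (0:ℝ),
      Real.cosh (j*t) * (y ^ (s-1) * Real.exp (-(a * Real.cosh t) * y))
      = ∫ t in Ioi (0:ℝ), (a ^ (-s) * Gamma s) * (Real.cosh (j*t) * Real.cosh t ^ (-s)) := by
    refine setIntegral_congr_fun measurableSet_Ioi fun t _ => ?_
    rw [MeasureTheory.integral_const_mul, hinner t]
    ring
  rw [hev, MeasureTheory.integral_const_mul, hcs.2]
  have hGs : Gamma s ≠ 0 := (Real.Gamma_pos_of_pos hs).ne'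
  field_simp
end
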